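/- Let Λ be a non-ordinary numerical semigroup with conductor c = c(Λ) and ω = ω(Λ), and let σ be a right generator of Λ with σ > c + 1. Let Λ̃ = Λ ∖ {σ}. Then ω(Λ̃) = 1, shrink(Λ̃) = ω·shrink(Λ) + Λ_{{c,…,σ−1}}, and c(shrink(Λ̃)) ≤ c(shrink(Λ))·ω + (⌊(ω−2)/(σ−c−1)⌋ + 1)·c, where the floor is taken in ℤ. -/

import Mathlib

open Pointwise

namespace NumSgpPaper

/-- `S` is a numerical semigroup: an additive submonoid of ℕ with finite complement. -/
structure IsNumSgp (S : Set ℕ) : Prop where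
  zero_mem : 0 ∈ S
  add_mem : ∀ ⦃a b : ℕ⦄, a ∈ S → b ∈ S → a + b ∈ S
  cofinite : Sᶜ.Finite

/-- The Frobenius number: the largest gap of `S` (junk value `0` if there are no gaps). -/
noncomputable def frob (S : Set ℕ) : ℕ := sSup Sᶜ

open Classical in
/-- The conductor: one plus the largest gap, and `0` if there are no gaps (so `c(ℕ) = 0`). -/
noncomputable def conductor (S : Set ℕ) : ℕ := if Sᶜ = ∅ then 0 else frob S + 1

/-- The genus: the number of gaps. -/
noncomputable def genus (S : Set ℕ) : ℕ := Sᶜ.ncard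

/-- The multiplicity: the smallest positive element. -/
noncomputable def mult (S : Set ℕ) : ℕ := sInf {n : ℕ | n ∈ S ∧ 0 < n}

/-- The jump: the difference between the second and first positive elements. -/
noncomputable def jump (S : Set ℕ) : ℕ := sInf {n : ℕ | n ∈ S ∧ mult S < n} - mult S

/-- A minimal generator: a positive element of `S` that is not the sum of
two positive elements of `S`. -/
def IsMinGen (S : Set ℕ) (x : ℕ) : Prop :=
  0 < x ∧ x ∈ S ∧ ¬ ∃ a b : ℕ, 0 < a ∧ 0 < b ∧ a ∈ S ∧ b ∈ S ∧ a + b = x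

/-- A right generator: a minimal generator larger than the Frobenius number. -/
def IsRightGen (S : Set ℕ) (x : ℕ) : Prop := IsMinGen S x ∧ frob S < x

/-- A strong generator: a right generator `σ` such that `σ + m(S)` is a minimal
generator of `S \ {σ}`. -/
def IsStrongGen (S : Set ℕ) (σ : ℕ) : Prop :=
  IsRightGen S σ ∧ IsMinGen (S \ {σ}) (σ + mult S)

/-- `S` is ordinary when its gaps are exactly `{1, …, g(S)}`. -/
def IsOrdinary (S : Set ℕ) : Prop := Sᶜ = Set.Icc 1 (genus S)

/-- The left elements: the elements of `S` smaller than the Frobenius number. -/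
def leftEls (S : Set ℕ) : Set ℕ := {x : ℕ | x ∈ S ∧ x < frob S}

/-- The gcd of a set of natural numbers. -/
noncomputable def setGcd (A : Set ℕ) : ℕ :=
  sInf {d : ℕ | (∀ a ∈ A, d ∣ a) ∧ ∀ e : ℕ, (∀ a ∈ A, e ∣ a) → e ∣ d}

/-- `ω(S)`: the gcd of the left elements of `S`. -/
noncomputable def omega' (S : Set ℕ) : ℕ := setGcd (leftEls S)

/-- The shrinking of `S`: the additive submonoid of ℕ generated by the left
elements divided by their gcd. -/
noncomputable def shrink (S : Set ℕ) : Set ℕ :=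
  (AddSubmonoid.closure ((fun x => x / omega' S) '' leftEls S) : AddSubmonoid ℕ)

/-- `T` is a descendant of `S`: a numerical semigroup contained in `S` all of whose
missing elements lie beyond the Frobenius number of `S`. -/
def IsDescendant (S T : Set ℕ) : Prop :=
  IsNumSgp T ∧ T ⊆ S ∧ ∀ x ∈ S \ T, frob S < x

/-- The pseudo-ordinary semigroup `P_{m,u} = {0, m} ∪ {n : n ≥ m + u}`. -/
def P (m u : ℕ) : Set ℕ := {0, m} ∪ {n : ℕ | m + u ≤ n}

/-- The submonoid of ℕ generated by the interval `{a, …, b}`. -/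
def intervalSgp (a b : ℕ) : Set ℕ := (AddSubmonoid.closure (Set.Icc a b) : AddSubmonoid ℕ)



theorem setGcd_spec (A : Set ℕ) :
    (∀ a ∈ A, setGcd A ∣ a) ∧ (∀ e : ℕ, (∀ a ∈ A, e ∣ a) → e ∣ setGcd A) ∧
      ((∃ a ∈ A, a ≠ 0) → ∃ s : Finset ℕ, ↑s ⊆ A ∧ s.gcd id = setGcd A) := by
  classical
  have key : ∃ d : ℕ, (∀ a ∈ A, d ∣ a) ∧ (∀ e : ℕ, (∀ a ∈ A, e ∣ a) → e ∣ d) ∧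
      ((∃ a ∈ A, a ≠ 0) → ∃ s : Finset ℕ, ↑s ⊆ A ∧ s.gcd id = d) := by
    by_cases hA : ∀ a ∈ A, a = 0
    · refine ⟨0, fun a ha => by rw [hA a ha], fun e he => dvd_zero e, fun hx => ?_⟩
      obtain ⟨a, ha, hane⟩ := hx
      exact absurd (hA a ha) hane
    · push_neg at hA
      obtain ⟨a₀, ha₀A, ha₀ne⟩ := hA
      set P := fun n : ℕ => n ≠ 0 ∧ ∃ s : Finset ℕ, ↑s ⊆ A ∧ s.gcd id = n with hP
      have hPne : ∃ n, P n := by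
        refine ⟨a₀, ha₀ne, {a₀}, by simp [ha₀A], ?_⟩
        simp [Finset.gcd_singleton]
      have hg : P (sInf {n | P n}) := Nat.sInf_mem hPne
      set g := sInf {n | P n} with hgdef
      obtain ⟨hg0, s, hsA, hsg⟩ := hg
      have hgpos : 0 < g := Nat.pos_of_ne_zero hg0
      refine ⟨g, ?_, ?_, fun _ => ⟨s, hsA, hsg⟩⟩
      · intro a ha
        have hgcd : (insert a s).gcd id = Nat.gcd a g := by
          rw [Finset.gcd_insert, hsg]; rfl
        have hne : Nat.gcd a g ≠ 0 := fun h0 => hg0 (Nat.eq_zero_of_gcd_eq_zero_right h0)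
        have h1 : P (Nat.gcd a g) :=
          ⟨hne, insert a s, by rw [Finset.coe_insert]; exact Set.insert_subset ha hsA, hgcd⟩
        have le1 : g ≤ Nat.gcd a g := Nat.sInf_le h1
        have le2 : Nat.gcd a g ≤ g := Nat.le_of_dvd hgpos (Nat.gcd_dvd_right a g)
        have : Nat.gcd a g = g := le_antisymm le2 le1
        exact this ▸ Nat.gcd_dvd_left a g
      · intro e he
        rw [← hsg]
        exact Finset.dvd_gcd fun b hb => he b (hsA hb)
  obtain ⟨d, hd1, hd2, hd3⟩ := key
  have hset : {d' : ℕ | (∀ a ∈ A, d' ∣ a) ∧ ∀ e : ℕ, (∀ a ∈ A, e ∣ a) → e ∣ d'} = {d} := by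
    ext d'
    simp only [Set.mem_setOf_eq, Set.mem_singleton_iff]
    constructor
    · rintro ⟨h1, h2⟩
      exact Nat.dvd_antisymm (hd2 d' h1) (h2 d hd1)
    · rintro rfl
      exact ⟨hd1, hd2⟩
  have : setGcd A = d := by rw [setGcd, hset, csInf_singleton]
  rw [this]
  exact ⟨hd1, hd2, hd3⟩

private lemma bez (a g m : ℕ) (hg : 0 < g) (hd : Nat.gcd a g ∣ m) :
    ∃ x : ℕ, x < g ∧ ((g : ℤ) ∣ (m : ℤ) - a * x) := by
  obtain ⟨t, ht⟩ := hd
  have hbez := Nat.gcd_eq_gcd_ab a g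
  set u := Nat.gcdA a g
  set v := Nat.gcdB a g
  have hgz : (0 : ℤ) < g := by exact_mod_cast hg
  set x0 : ℤ := (u * t) % g with hx0
  have hx0nn : 0 ≤ x0 := Int.emod_nonneg _ hgz.ne'
  have hx0lt : x0 < g := Int.emod_lt_of_pos _ hgz
  refine ⟨x0.toNat, ?_, ?_⟩
  · exact_mod_cast (Int.toNat_of_nonneg hx0nn) ▸ hx0lt
  · rw [Int.toNat_of_nonneg hx0nn]
    have hq : x0 = u * t - g * (u * t / g) := by
      rw [hx0, Int.emod_def]
    have hm : (m : ℤ) = ((Nat.gcd a g : ℤ)) * t := by exact_mod_cast ht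
    rw [hm, hbez, hq]
    exact ⟨v * t + a * (u * t / g), by ring⟩

theorem closure_all_large (A : Set ℕ) (h1 : setGcd A = 1) :
    ∃ N : ℕ, ∀ m, N ≤ m → m ∈ AddSubmonoid.closure A := by
  classical
  obtain ⟨hdvd, hdvd2, hfin⟩ := setGcd_spec A
  have hex : ∃ a ∈ A, a ≠ 0 := by
    by_contra hc
    push_neg at hc
    have : (0 : ℕ) ∣ setGcd A := hdvd2 0 (fun a ha => by rw [hc a ha])
    rw [h1] at this
    simp at this
  obtain ⟨s, hsA, hsg⟩ := hfin hex
  rw [h1] at hsg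
  have main : ∀ s : Finset ℕ, ↑s ⊆ A → s.gcd id ≠ 0 →
      ∃ N, ∀ m, s.gcd id ∣ m → N ≤ m → m ∈ AddSubmonoid.closure A := by
    intro s
    induction s using Finset.induction_on with
    | empty => intro _ hg0; simp [Finset.gcd_empty] at hg0
    | @insert a s ha ih =>
      intro hsub hg0
      have hsubS : ↑s ⊆ A := by
        refine subset_trans ?_ hsub
        rw [Finset.coe_insert]
        exact Set.subset_insert _ _
      have haA : a ∈ A := hsub (by simp)
      have hac : a ∈ AddSubmonoid.closure A := AddSubmonoid.subset_closure haA
      have hgcd : (insert a s).gcd id = Nat.gcd a (s.gcd id) := by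
        rw [Finset.gcd_insert]; rfl
      by_cases hgs : s.gcd id = 0
      · refine ⟨0, fun m hm _ => ?_⟩
        rw [hgcd, hgs, Nat.gcd_zero_right] at hm
        obtain ⟨t, rfl⟩ := hm
        rw [mul_comm, ← smul_eq_mul]
        exact AddSubmonoid.nsmul_mem _ hac t
      · obtain ⟨N₀, hN₀⟩ := ih hsubS hgs
        set g₀ := s.gcd id with hg₀
        refine ⟨N₀ + a * g₀, fun m hm hmN => ?_⟩
        rw [hgcd] at hm
        obtain ⟨x, hx, hdvdx⟩ := bez a g₀ m (Nat.pos_of_ne_zero hgs) hm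
        have hax : a * x ≤ a * g₀ := Nat.mul_le_mul_left a hx.le
        have haxm : a * x ≤ m := le_trans hax (by omega)
        have hy : g₀ ∣ m - a * x := by
          have h2 : ((g₀ : ℤ)) ∣ ((m - a * x : ℕ) : ℤ) := by
            rw [Nat.cast_sub haxm]
            push_cast
            exact hdvdx
          exact_mod_cast h2
        have hyc := hN₀ _ hy (by omega)
        have hm' : m = a * x + (m - a * x) := by omega
        rw [hm']
        refine AddSubmonoid.add_mem _ ?_ hyc
        rw [mul_comm, ← smul_eq_mul]
        exact AddSubmonoid.nsmul_mem _ hac x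
  obtain ⟨N, hN⟩ := main s hsA (by rw [hsg]; exact one_ne_zero)
  exact ⟨N, fun m hm => hN m (by rw [hsg]; exact one_dvd m) hm⟩

private lemma mem_intervalSgp (c b : ℕ) (hcb : c ≤ b) :
    ∀ k x : ℕ, k * c ≤ x → x ≤ k * b → x ∈ AddSubmonoid.closure (Set.Icc c b) := by
  intro k
  induction k with
  | zero =>
    intro x h1 h2
    simp only [Nat.zero_mul, Nat.le_zero] at h2
    rw [h2]
    exact AddSubmonoid.zero_mem _
  | succ k ih =>
    intro x h1 h2
    rw [Nat.succ_mul] at h1 h2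
    have hcx : c ≤ x := by omega
    rcases le_total (x - c) (k * b) with hc | hc
    · have h1' : k * c ≤ x - c := by omega
      have hmem := ih (x - c) h1' hc
      have hx : x = (x - c) + c := by omega
      rw [hx]
      exact AddSubmonoid.add_mem _ hmem (AddSubmonoid.subset_closure ⟨le_refl c, hcb⟩)
    · have hy := ih (k * b) (Nat.mul_le_mul_left k hcb) le_rfl
      have hkbx : k * b ≤ x := by omega
      have hxx : c ≤ x - k * b := by omega
      have h2' : x - k * b ≤ b := by omega
      have hx : x = k * b + (x - k * b) := by omega
      rw [hx]
      exact AddSubmonoid.add_mem _ hy (AddSubmonoid.subset_closure ⟨hxx, h2'⟩)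

private lemma coe_sup_eq_add (M N : AddSubmonoid ℕ) :
    ((M ⊔ N : AddSubmonoid ℕ) : Set ℕ) = (M : Set ℕ) + (N : Set ℕ) := by
  ext x
  rw [SetLike.mem_coe, AddSubmonoid.mem_sup, Set.mem_add]
  tauto


/-- If `σ > c + 1` is a right generator of the non-ordinary semigroup `Λ`, and
`Λ̃ = Λ \ {σ}`, then `ω(Λ̃) = 1`, `shrink(Λ̃) = ω·shrink(Λ) + Λ_{{c,…,σ-1}}`, and
`c(shrink(Λ̃)) ≤ c(shrink(Λ))·ω + (⌊(ω-2)/(σ-c-1)⌋ + 1)·c` (floor in ℤ). -/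
theorem stmt12 (Λ : Set ℕ) (h : IsNumSgp Λ) (hord : ¬ IsOrdinary Λ)
    (σ : ℕ) (hσ : IsRightGen Λ σ) (hgt : conductor Λ + 1 < σ) :
    omega' (Λ \ {σ}) = 1 ∧
    shrink (Λ \ {σ}) =
      (fun x => omega' Λ * x) '' shrink Λ + intervalSgp (conductor Λ) (σ - 1) ∧
    (conductor (shrink (Λ \ {σ})) : ℤ) ≤
      (conductor (shrink Λ) : ℤ) * (omega' Λ : ℤ)
        + (((omega' Λ : ℤ) - 2) / ((σ : ℤ) - (conductor Λ : ℤ) - 1) + 1)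
          * (conductor Λ : ℤ) := by
  classical
  obtain ⟨hgdvd, hgdvd2, -⟩ := setGcd_spec (leftEls Λ)
  -- basic facts about Λ
  have hcne : Λᶜ.Nonempty := by
    rcases Set.eq_empty_or_nonempty Λᶜ with he | hne
    · exfalso
      apply hord
      rw [IsOrdinary, he, genus, he]
      simp
    · exact hne
  have hFmem : frob Λ ∈ Λᶜ := Nat.sSup_mem hcne h.cofinite.bddAbove
  have hFub : ∀ x ∈ Λᶜ, x ≤ frob Λ := fun x hx => le_csSup h.cofinite.bddAbove hx
  have hbig : ∀ x, frob Λ < x → x ∈ Λ := by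
    intro x hx
    by_contra hc
    exact absurd (hFub x hc) (not_le.2 hx)
  have hcond : conductor Λ = frob Λ + 1 := if_neg (Set.nonempty_iff_ne_empty.mp hcne)
  set F := frob Λ with hFdef
  set c := conductor Λ with hcdef
  have hσF : F < σ := hσ.2
  have hσΛ : σ ∈ Λ := hσ.1.2.1
  have hσc : c + 2 ≤ σ := by omega
  -- positive left element
  have hex : ∃ x, x ∈ Λ ∧ 0 < x ∧ x < F := by
    by_contra hc
    push_neg at hc
    apply hord
    have hcompl : Λᶜ = Set.Icc 1 F := by
      ext x
      constructor
      · intro hx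
        refine ⟨Nat.one_le_iff_ne_zero.2 (fun h0 => hx (h0 ▸ h.zero_mem)), hFub x hx⟩
      · rintro ⟨h1, h2⟩
        by_contra hxm
        rw [Set.notMem_compl_iff] at hxm
        rcases lt_or_eq_of_le h2 with hlt | heq
        · have := hc x hxm (by omega)
          omega
        · exact hFmem (heq ▸ hxm)
    have hcard : (Set.Icc 1 F).ncard = F := by
      rw [← Finset.coe_Icc, Set.ncard_coe_finset, Nat.card_Icc]
      omega
    rw [IsOrdinary, genus, hcompl, hcard]
  obtain ⟨x₀, hx₀Λ, hx₀pos, hx₀F⟩ := hex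
  set ω := omega' Λ with hωdef
  have hωdvd : ∀ x ∈ leftEls Λ, ω ∣ x := hgdvd
  have hωpos : 0 < ω := by
    rcases Nat.eq_zero_or_pos ω with h0 | hp
    · exfalso
      have := hωdvd x₀ ⟨hx₀Λ, hx₀F⟩
      rw [h0] at this
      simp at this
      omega
    · exact hp
  -- facts about Λ \ {σ}
  have hTc : (Λ \ {σ})ᶜ = Λᶜ ∪ {σ} := by
    ext x
    simp only [Set.mem_compl_iff, Set.mem_diff, Set.mem_singleton_iff, Set.mem_union]
    tauto
  have hTbdd : BddAbove ((Λ \ {σ})ᶜ) := by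
    rw [hTc]
    refine ⟨σ, ?_⟩
    rintro x (hx | hx)
    · exact (hFub x hx).trans hσF.le
    · simp at hx; omega
  have hfT : frob (Λ \ {σ}) = σ := by
    rw [frob, hTc]
    apply le_antisymm
    · refine csSup_le ⟨σ, by simp⟩ ?_
      rintro x (hx | hx)
      · exact (hFub x hx).trans hσF.le
      · simp at hx; omega
    · exact le_csSup (hTc ▸ hTbdd) (by simp)
  have hleftT : leftEls (Λ \ {σ}) = leftEls Λ ∪ Set.Ico c σ := by
    ext x
    simp only [leftEls, hfT, Set.mem_setOf_eq, Set.mem_diff, Set.mem_singleton_iff,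
      Set.mem_union, Set.mem_Ico]
    constructor
    · rintro ⟨⟨hxΛ, hxσ⟩, hlt⟩
      rcases lt_or_ge x F with hxF | hxF
      · exact Or.inl ⟨hxΛ, hxF⟩
      · right
        have : x ≠ F := fun hxe => hFmem (hxe ▸ hxΛ)
        omega
    · rintro (⟨hxΛ, hxF⟩ | ⟨hc1, hc2⟩)
      · exact ⟨⟨hxΛ, by omega⟩, by omega⟩
      · exact ⟨⟨hbig x (by omega), by omega⟩, by omega⟩
  -- part 1
  have hpart1 : omega' (Λ \ {σ}) = 1 := by
    obtain ⟨hd1, -, -⟩ := setGcd_spec (leftEls (Λ \ {σ}))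
    have hc1 : c ∈ leftEls (Λ \ {σ}) := by
      rw [hleftT]; right; exact ⟨le_refl c, by omega⟩
    have hc2 : c + 1 ∈ leftEls (Λ \ {σ}) := by
      rw [hleftT]; right; exact ⟨by omega, by omega⟩
    have d1 := hd1 c hc1
    have d2 := hd1 (c + 1) hc2
    have : omega' (Λ \ {σ}) ∣ 1 := by
      have := Nat.dvd_sub d2 d1
      simpa [omega'] using this
    exact Nat.dvd_one.mp this
  -- shrink of Λ \ {σ} as a closure
  have hshrinkT : shrink (Λ \ {σ}) =
      (AddSubmonoid.closure (leftEls Λ ∪ Set.Ico c σ) : Set ℕ) := by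
    rw [shrink, hpart1, hleftT]
    have hid : (fun x : ℕ => x / 1) = fun x => x := funext fun x => Nat.div_one x
    rw [hid, Set.image_id']
  -- the image description
  have himg : (fun x => ω * x) '' shrink Λ = (AddSubmonoid.closure (leftEls Λ) : Set ℕ) := by
    rw [shrink, ← hωdef]
    have hmap := AddMonoidHom.map_mclosure (AddMonoidHom.mulLeft ω)
      ((fun x => x / ω) '' leftEls Λ)
    have hcoe : (fun x => ω * x) '' ((AddSubmonoid.closure ((fun x => x / ω) '' leftEls Λ) :
        AddSubmonoid ℕ) : Set ℕ) =
        ((AddSubmonoid.closure ((fun x => x / ω) '' leftEls Λ)).map (AddMonoidHom.mulLeft ω) :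
          Set ℕ) := by
      rw [AddSubmonoid.coe_map]
      rfl
    rw [hcoe, hmap]
    rw [Set.image_image]
    have : ∀ x ∈ leftEls Λ, (AddMonoidHom.mulLeft ω) (x / ω) = x := by
      intro x hx
      show ω * (x / ω) = x
      exact Nat.mul_div_cancel' (hωdvd x hx)
    rw [Set.image_congr this, Set.image_id']
  -- part 2
  have hIset : Set.Icc c (σ - 1) = Set.Ico c σ := by
    ext y
    simp only [Set.mem_Icc, Set.mem_Ico]
    omega
  have hpart2 : shrink (Λ \ {σ}) =
      (fun x => ω * x) '' shrink Λ + intervalSgp c (σ - 1) := by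
    rw [hshrinkT, himg, intervalSgp, hIset, ← coe_sup_eq_add, ← AddSubmonoid.closure_union]
  -- part 3 setup: conductor of shrink Λ
  have hA1 : setGcd ((fun x => x / ω) '' leftEls Λ) = 1 := by
    obtain ⟨hd1, -, -⟩ := setGcd_spec ((fun x => x / ω) '' leftEls Λ)
    set e := setGcd ((fun x => x / ω) '' leftEls Λ) with hedef
    have hcomm : ∀ x ∈ leftEls Λ, e * ω ∣ x := by
      intro x hx
      obtain ⟨t, ht⟩ := hd1 (x / ω) ⟨x, hx, rfl⟩
      refine ⟨t, ?_⟩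
      have hxe : x = ω * (x / ω) := (Nat.mul_div_cancel' (hωdvd x hx)).symm
      rw [hxe, ht]; ring
    have heω : e * ω ∣ ω := hgdvd2 (e * ω) hcomm
    have he1 : e ≤ 1 := by
      have := Nat.le_of_dvd hωpos heω
      nlinarith
    have he0 : e ≠ 0 := by
      intro h0
      have hdx := hd1 (x₀ / ω) ⟨x₀, ⟨hx₀Λ, hx₀F⟩, rfl⟩
      rw [h0] at hdx
      have hx0 : x₀ / ω = 0 := Nat.eq_zero_of_zero_dvd hdx
      have : 0 < x₀ / ω :=
        Nat.div_pos (Nat.le_of_dvd hx₀pos (hωdvd x₀ ⟨hx₀Λ, hx₀F⟩)) hωpos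
      omega
    omega
  obtain ⟨N, hN⟩ := closure_all_large _ hA1
  set cS := conductor (shrink Λ) with hcSdef
  have hS : ∀ m, cS ≤ m → m ∈ shrink Λ := by
    intro m hm
    by_contra hmS
    have hmc : m ∈ (shrink Λ)ᶜ := hmS
    have hbdd : BddAbove ((shrink Λ)ᶜ) := by
      refine ⟨N, fun y hy => ?_⟩
      by_contra hcy
      push_neg at hcy
      exact hy (hN y hcy.le)
    have hne : (shrink Λ)ᶜ ≠ ∅ := Set.nonempty_iff_ne_empty.mp ⟨m, hmc⟩
    have hcs : cS = sSup ((shrink Λ)ᶜ) + 1 := by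
      rw [hcSdef, conductor, if_neg hne, frob]
    have hle := le_csSup hbdd hmc
    omega
  -- k₁
  set dZ : ℤ := (σ : ℤ) - (c : ℤ) - 1 with hdZdef
  have hσcZ : ((c : ℤ)) + 2 ≤ (σ : ℤ) := by exact_mod_cast hσc
  have hωZ : (1 : ℤ) ≤ (ω : ℤ) := by exact_mod_cast hωpos
  have hdZpos : 0 < dZ := by omega
  have hk0 : (0 : ℤ) ≤ ((ω : ℤ) - 2) / dZ + 1 := by
    have hmono : (-dZ) / dZ ≤ ((ω : ℤ) - 2) / dZ := Int.ediv_le_ediv hdZpos (by omega)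
    have hneg : (-dZ) / dZ = -1 := by
      rw [Int.neg_ediv_of_dvd (dvd_refl dZ), Int.ediv_self hdZpos.ne']
    omega
  set k₁ : ℕ := (((ω : ℤ) - 2) / dZ + 1).toNat with hk₁def
  have hk₁ : (k₁ : ℤ) = ((ω : ℤ) - 2) / dZ + 1 := Int.toNat_of_nonneg hk0
  have hkd : (ω : ℤ) - 1 ≤ (k₁ : ℤ) * dZ := by
    have hmod := Int.mul_ediv_add_emod ((ω : ℤ) - 2) dZ
    have hlt := Int.emod_lt_of_pos ((ω : ℤ) - 2) hdZpos
    rw [hk₁]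
    nlinarith [hmod, hlt]
  have hkN : k₁ * c + (ω - 1) ≤ k₁ * (σ - 1) := by
    have hcast : ((k₁ * c + (ω - 1) : ℕ) : ℤ) ≤ ((k₁ * (σ - 1) : ℕ) : ℤ) := by
      push_cast [Nat.cast_sub hωpos, Nat.cast_sub (show 1 ≤ σ by omega)]
      nlinarith [hkd]
    exact_mod_cast hcast
  set B := cS * ω + k₁ * c with hBdef
  have hmemB : ∀ n, B ≤ n → n ∈ shrink (Λ \ {σ}) := by
    intro n hn
    rw [hpart2]
    set r := (n - k₁ * c) % ω with hrdef
    set m := (n - k₁ * c) / ω with hmdef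
    have hkcn : k₁ * c ≤ n := by omega
    have hdm : ω * m + r = n - k₁ * c := Nat.div_add_mod _ ω
    have hrω : r < ω := Nat.mod_lt _ hωpos
    have hmcS : cS ≤ m := by
      rw [hmdef]
      rw [Nat.le_div_iff_mul_le hωpos]
      omega
    have hmS := hS m hmcS
    have hi : k₁ * c + r ∈ AddSubmonoid.closure (Set.Icc c (σ - 1)) := by
      refine mem_intervalSgp c (σ - 1) (by omega) k₁ _ (Nat.le_add_right _ _) ?_
      omega
    rw [Set.mem_add]
    exact ⟨ω * m, ⟨m, hmS, rfl⟩, k₁ * c + r, hi, by omega⟩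
  have hcondT : conductor (shrink (Λ \ {σ})) ≤ B := by
    by_cases hTe : (shrink (Λ \ {σ}))ᶜ = ∅
    · rw [conductor, if_pos hTe]
      exact Nat.zero_le _
    · have hne : ((shrink (Λ \ {σ}))ᶜ).Nonempty := Set.nonempty_iff_ne_empty.2 hTe
      have hlt : ∀ y ∈ (shrink (Λ \ {σ}))ᶜ, y < B := by
        intro y hy
        by_contra hcy
        push_neg at hcy
        exact hy (hmemB y hcy)
      have hB1 : 1 ≤ B := by
        obtain ⟨y, hy⟩ := hne
        have := hlt y hy
        omega
      rw [conductor, if_neg hTe, frob]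
      have hsup := csSup_le hne (fun y hy => show y ≤ B - 1 by have := hlt y hy; omega)
      omega
  refine ⟨hpart1, hpart2, ?_⟩
  calc (conductor (shrink (Λ \ {σ})) : ℤ) ≤ (B : ℤ) := by exact_mod_cast hcondT
    _ = (cS : ℤ) * (ω : ℤ) + (((ω : ℤ) - 2) / dZ + 1) * (c : ℤ) := by
        rw [hBdef]; push_cast; rw [hk₁]
    _ = (conductor (shrink Λ) : ℤ) * (ω : ℤ)
        + (((ω : ℤ) - 2) / ((σ : ℤ) - (c : ℤ) - 1) + 1) * (c : ℤ) := by rw [hdZdef]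


end NumSgpPaper
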